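/- For every prime p and natural number m ≥ 1 with p^m ≥ 3, there exists a quandle of cyclic type with exactly p^m elements. -/

import Mathlib

/-- The inner automorphism group of a quandle: the subgroup of permutations
generated by the maps `φ x : y ↦ x ◃ y`. -/
def Inn (X : Type*) [Quandle X] : Subgroup (Equiv.Perm X) :=
  Subgroup.closure (Set.range (fun x : X => Rack.act' x))


/-- A finite quandle is of cyclic type if each `φ x` is a cycle whose unique
fixed point is `x` (i.e. it acts as an `(n-1)`-cycle on `X \ {x}`). -/
def IsCyclicType (X : Type*) [Quandle X] : Prop :=
  ∀ x : X, Equiv.Perm.IsCycle (Rack.act' x) ∧ ∀ y : X, Rack.act' x y = y ↔ y = x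

/-- The Alexander quandle on a field `F` with parameter a unit `u`. -/
def alexQuandle (F : Type) [Field F] (u : Fˣ) : Quandle F where
  act x y := (u : F) * (y - x) + x
  self_distrib := by intro x y z; ring
  invAct x y := (u⁻¹ : Fˣ) * (y - x) + x
  left_inv x y := by field_simp; simp
  right_inv x y := by field_simp; simp
  fix := by intro x; simp

theorem alex_pow (F : Type) [Field F] (u : Fˣ) (x y : F) (k : ℕ) :
    ((@Rack.act' F (alexQuandle F u).toRack x) ^ k) y
      = (u : F) ^ k * (y - x) + x := by
  induction k with
  | zero => show y = _; simp
  | succ n ih =>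
      rw [pow_succ', Equiv.Perm.mul_apply, ih]
      show (u : F) * ((u:F)^n * (y-x) + x - x) + x = _
      ring

theorem alex_cyclic (F : Type) [Field F] [Finite F] (u : Fˣ)
    (hu : ∀ v : Fˣ, v ∈ Subgroup.zpowers u) (hu1 : (u : F) ≠ 1) :
    @IsCyclicType F (alexQuandle F u) := by
  letI := alexQuandle F u
  intro x
  have key : ∀ y : F, Rack.act' x y = y ↔ y = x := by
    intro y
    show (u : F) * (y - x) + x = y ↔ y = x
    constructor
    · intro h
      have h0 : ((u : F) - 1) * (y - x) = 0 := by linear_combination h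
      rcases mul_eq_zero.1 h0 with h' | h'
      · exact absurd (sub_eq_zero.1 h') hu1
      · exact sub_eq_zero.1 h'
    · intro h; subst h; ring
  refine ⟨⟨x + 1, ?_, ?_⟩, key⟩
  · intro h
    have := (key (x + 1)).1 h
    simp at this
  · intro y hy
    have hyx : y ≠ x := fun h => hy ((key y).2 h)
    have hym : y - x ≠ 0 := sub_ne_zero.2 hyx
    obtain ⟨k, hk⟩ := mem_powers_iff_mem_zpowers.2 (hu (Units.mk0 (y - x) hym))
    refine ⟨(k : ℤ), ?_⟩
    rw [zpow_natCast, alex_pow]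
    have hpow : (u : F) ^ k = y - x := by
      have := congrArg Units.val hk
      simpa using this
    rw [hpow]; ring

theorem stmt12 (p m : ℕ) (hp : p.Prime) (hm : 1 ≤ m) (h3 : 3 ≤ p ^ m) :
    ∃ (X : Type) (_ : Fintype X) (_ : Quandle X),
      Fintype.card X = p ^ m ∧ IsCyclicType X := by
  haveI := Fact.mk hp
  haveI : Fintype (GaloisField p m) := Fintype.ofFinite _
  haveI : DecidableEq (GaloisField p m) := Classical.decEq _
  set F := GaloisField p m with hF
  have hcard : Fintype.card F = p ^ m := by
    rw [← Nat.card_eq_fintype_card]; exact GaloisField.card p m (by omega)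
  obtain ⟨u, hu⟩ := IsCyclic.exists_generator (α := Fˣ)
  have hcardU : Fintype.card Fˣ = p ^ m - 1 := by
    rw [Fintype.card_units, hcard]
  have hu1 : (u : F) ≠ 1 := by
    intro h
    have hu' : u = 1 := Units.ext h
    subst hu'
    have h2 : ∀ v : Fˣ, v = 1 := by
      intro v
      obtain ⟨k, hk⟩ := hu v
      simpa using hk.symm
    have : Fintype.card Fˣ ≤ 1 :=
      Fintype.card_le_one_iff.2 fun a b => by rw [h2 a, h2 b]
    omega
  exact ⟨F, inferInstance, alexQuandle F u, hcard, alex_cyclic F u hu hu1⟩
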